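/- Let Y ⊆ ℝ^{d'} be a nonempty closed convex set and let f : ℝ^d × Y → ℝ be differentiable with F(x,y) = (∇_x f(x,y), −∇_y f(x,y)) being ℓ-Lipschitz, ρ-weakly convex in x for every y (ρ > 0), and μ_y-strongly concave in y for every x (μ_y > 0). Let P(x) = max_{y∈Y} f(x,y). Fix x₀ ∈ ℝ^d, y₀ ∈ Y, and a pair (x₁, y₁) ∈ ℝ^d × Y. Define f₁(x,y) = f(x,y) + ρ‖x − x₀‖² and f₂(x,y) = f(x,y) + ρ‖x − x₁‖², with duality gaps Gap_i(x,y) = max_{y'∈Y} f_i(x, y') − min_{x'∈ℝ^d} f_i(x', y) for i = 1, 2. Then Gap₁(x₁, y₁) ≥ (3/50)·Gap₂(x₁, y₁) + (4/5)·(P(x₁) − P(x₀)). -/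

import Mathlib

open scoped RealInnerProductSpace

/-- Strong convexity property of the minimizer of `g + ρ‖· - x₀‖²` when
`g + (ρ/2)‖·‖²` is convex. -/
lemma strong_min_aux {E : Type*} [NormedAddCommGroup E] [InnerProductSpace ℝ E]
    (g : E → ℝ) (ρ : ℝ) (hρ : 0 < ρ)
    (hcv : ConvexOn ℝ Set.univ (fun x => g x + ρ / 2 * ‖x‖ ^ 2))
    (x₀ xm : E) (m : ℝ)
    (hmin : ∀ x, m ≤ g x + ρ * ‖x - x₀‖ ^ 2)
    (hval : g xm + ρ * ‖xm - x₀‖ ^ 2 = m) :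
    ∀ x, g x + ρ * ‖x - x₀‖ ^ 2 ≥ m + ρ / 4 * ‖x - xm‖ ^ 2 := by
  intro x
  set z : E := (1/2 : ℝ) • x + (1/2 : ℝ) • xm with hz
  have h1 := hcv.2 (Set.mem_univ x) (Set.mem_univ xm)
    (by norm_num : (0:ℝ) ≤ 1/2) (by norm_num : (0:ℝ) ≤ 1/2) (by norm_num)
  simp only [smul_eq_mul] at h1
  rw [← hz] at h1
  have h2 := hmin z
  have e1 : ‖z‖ ^ 2 = 1/4 * ‖x‖^2 + 1/2 * ⟪x, xm⟫ + 1/4 * ‖xm‖^2 := by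
    rw [hz, ← real_inner_self_eq_norm_sq, ← real_inner_self_eq_norm_sq,
      ← real_inner_self_eq_norm_sq]
    simp [inner_add_add_self, real_inner_smul_left, real_inner_smul_right,
      real_inner_comm xm x]
    rw [norm_add_sq_real, norm_smul, norm_smul, real_inner_smul_left, real_inner_smul_right]
    norm_num
    rw [real_inner_comm xm x]
    ring
  have e2 : ‖z - x₀‖ ^ 2 = ‖z‖^2 - 2 * ⟪x, x₀⟫ * (1/2) - 2 * ⟪xm, x₀⟫ * (1/2) + ‖x₀‖^2 := by
    rw [norm_sub_sq_real, hz]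
    simp [inner_add_left, real_inner_smul_left]
    ring
  have e3 : ‖x - x₀‖ ^ 2 = ‖x‖^2 - 2 * ⟪x, x₀⟫ + ‖x₀‖^2 := by
    rw [norm_sub_sq_real]
  have e4 : ‖xm - x₀‖ ^ 2 = ‖xm‖^2 - 2 * ⟪xm, x₀⟫ + ‖x₀‖^2 := by
    rw [norm_sub_sq_real]
  have e5 : ‖x - xm‖ ^ 2 = ‖x‖^2 - 2 * ⟪x, xm⟫ + ‖xm‖^2 := by
    rw [norm_sub_sq_real]
  nlinarith [h1, h2]

/-- Elementary quadratic norm inequality. -/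
lemma norm_quad_aux {E : Type*} [NormedAddCommGroup E] [InnerProductSpace ℝ E]
    (a u w : E) :
    1/4 * ‖a - u‖^2 - ‖a‖^2 + ‖a - w‖^2 ≥ -3 * ‖w‖^2 - 2 * (‖u‖ * ‖w‖) := by
  have h1 : ‖a - u‖^2 = ‖a‖^2 - 2 * ⟪a, u⟫ + ‖u‖^2 := norm_sub_sq_real a u
  have h2 : ‖a - w‖^2 = ‖a‖^2 - 2 * ⟪a, w⟫ + ‖w‖^2 := norm_sub_sq_real a w
  have c1 : ⟪a, u⟫ ≤ ‖a‖ * ‖u‖ := real_inner_le_norm a u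
  have c2 : ⟪a, w⟫ ≤ ‖a‖ * ‖w‖ := real_inner_le_norm a w
  nlinarith [sq_nonneg (‖a‖ - ‖u‖ - 4 * ‖w‖)]


/-- Lemma 5 of Yan et al. (2020): with `f₁(x,y) = f(x,y) + ρ‖x − x₀‖²` and
`f₂(x,y) = f(x,y) + ρ‖x − x₁‖²`, the duality gaps satisfy
`Gap₁(x₁,y₁) ≥ (3/50)·Gap₂(x₁,y₁) + (4/5)·(P(x₁) − P(x₀))`. -/
theorem stmt7 {d d' : ℕ}
    (Y : Set (EuclideanSpace ℝ (Fin d')))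
    (hYne : Y.Nonempty) (hYcl : IsClosed Y) (hYcv : Convex ℝ Y)
    (f : EuclideanSpace ℝ (Fin d) → EuclideanSpace ℝ (Fin d') → ℝ)
    (ℓ ρ μy : ℝ) (hℓ : 0 < ℓ) (hρ : 0 < ρ) (hμy : 0 < μy)
    (hdiff : Differentiable ℝ fun p : EuclideanSpace ℝ (Fin d) × EuclideanSpace ℝ (Fin d') =>
      f p.1 p.2)
    (hFLip : ∀ (x x' : EuclideanSpace ℝ (Fin d)), ∀ y ∈ Y, ∀ y' ∈ Y,
      ‖gradient (fun u => f u y) x - gradient (fun u => f u y') x'‖ ^ 2 +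
          ‖gradient (f x) y - gradient (f x') y'‖ ^ 2 ≤
        ℓ ^ 2 * (‖x - x'‖ ^ 2 + ‖y - y'‖ ^ 2))
    (hwc : ∀ y ∈ Y, ConvexOn ℝ Set.univ fun x : EuclideanSpace ℝ (Fin d) =>
      f x y + ρ / 2 * ‖x‖ ^ 2)
    (hsc : ∀ x, ConcaveOn ℝ Y fun y => f x y + μy / 2 * ‖y‖ ^ 2)
    (P : EuclideanSpace ℝ (Fin d) → ℝ)
    (hP : ∀ x, IsGreatest ((fun y => f x y) '' Y) (P x))
    (x₀ x₁ : EuclideanSpace ℝ (Fin d)) (y₀ y₁ : EuclideanSpace ℝ (Fin d'))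
    (hy₀ : y₀ ∈ Y) (hy₁ : y₁ ∈ Y)
    (M₁ m₁ M₂ m₂ : ℝ)
    (hM₁ : IsGreatest ((fun y => f x₁ y + ρ * ‖x₁ - x₀‖ ^ 2) '' Y) M₁)
    (hm₁ : IsLeast (Set.range fun x => f x y₁ + ρ * ‖x - x₀‖ ^ 2) m₁)
    (hM₂ : IsGreatest ((fun y => f x₁ y + ρ * ‖x₁ - x₁‖ ^ 2) '' Y) M₂)
    (hm₂ : IsLeast (Set.range fun x => f x y₁ + ρ * ‖x - x₁‖ ^ 2) m₂) :
    M₁ - m₁ ≥ 3 / 50 * (M₂ - m₂) + 4 / 5 * (P x₁ - P x₀) := by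
  obtain ⟨xm, hxm⟩ := hm₁.1
  obtain ⟨z, hzv⟩ := hm₂.1
  -- strong convexity around the minimizer of f₁(·, y₁)
  have hstrong := strong_min_aux (fun x => f x y₁) ρ hρ (hwc y₁ hy₁) x₀ xm m₁
    (fun x => hm₁.2 ⟨x, rfl⟩) hxm
  -- identify M₂ and M₁
  have hM₂' : M₂ = P x₁ := by
    have him : ((fun y => f x₁ y + ρ * ‖x₁ - x₁‖ ^ 2) '' Y) = (fun y => f x₁ y) '' Y := by
      simp
    exact IsGreatest.unique (him ▸ hM₂) (hP x₁)
  have hM₁' : M₁ = P x₁ + ρ * ‖x₁ - x₀‖ ^ 2 := by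
    refine hM₁.unique ⟨?_, ?_⟩
    · obtain ⟨y, hyY, hye⟩ := (hP x₁).1
      refine ⟨y, hyY, ?_⟩
      show f x₁ y + ρ * ‖x₁ - x₀‖ ^ 2 = P x₁ + ρ * ‖x₁ - x₀‖ ^ 2
      have hye' : f x₁ y = P x₁ := hye
      rw [hye']
    · rintro v ⟨y, hyY, rfl⟩
      have := (hP x₁).2 ⟨y, hyY, rfl⟩
      simp only at this ⊢
      linarith
  set D := ‖x₁ - x₀‖ with hD
  set s := ‖xm - x₀‖ with hs
  set t := ‖x₁ - xm‖ with ht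
  -- E1 : P x₀ ≥ m₁ + (ρ/4) s²
  have E1 : P x₀ ≥ m₁ + ρ / 4 * s ^ 2 := by
    have h := hstrong x₀
    have hp := (hP x₀).2 ⟨y₁, hy₁, rfl⟩
    simp only [sub_self, norm_zero] at h
    rw [norm_sub_rev x₀ xm] at h
    simp only at hp
    nlinarith
  -- E2 : P x₁ + ρ D² ≥ m₁ + (ρ/4) t²
  have E2 : P x₁ + ρ * D ^ 2 ≥ m₁ + ρ / 4 * t ^ 2 := by
    have h := hstrong x₁
    have hp := (hP x₁).2 ⟨y₁, hy₁, rfl⟩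
    simp only at hp h
    nlinarith
  -- E3 : m₂ ≥ m₁ - 3 ρ D² - 2 ρ s D
  have E3 : m₂ ≥ m₁ - 3 * ρ * D ^ 2 - 2 * ρ * (s * D) := by
    have h := hstrong z
    have hq := norm_quad_aux (z - x₀) (xm - x₀) (x₁ - x₀)
    rw [sub_sub_sub_cancel_right, sub_sub_sub_cancel_right, ← hD, ← hs] at hq
    have hzv' : f z y₁ + ρ * ‖z - x₁‖ ^ 2 = m₂ := hzv
    have hq2 : ρ * (-3 * D ^ 2 - 2 * (s * D)) ≤
        ρ * (1/4 * ‖z - xm‖ ^ 2 - ‖z - x₀‖ ^ 2 + ‖z - x₁‖ ^ 2) :=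
      mul_le_mul_of_nonneg_left hq hρ.le
    nlinarith [h, hq2, hzv']
  have key : (34:ℝ)/50 * D ^ 2 - 3/25 * (s * D) + 1/5 * s ^ 2 + 7/200 * t ^ 2 ≥ 0 := by
    nlinarith [sq_nonneg (s - 3/10 * D), sq_nonneg D, sq_nonneg t]
  have hkey := mul_nonneg hρ.le key
  rw [hM₁', hM₂']
  nlinarith [E1, E2, E3, hkey]
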